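/- Let n ≥ 1 and let s₁, s₂ be natural numbers with s₁ ≤ n, s₂ ≤ n, s₁² ≥ n and s₂² ≥ n. If S₁ and S₂ are independent uniformly random subsets of {1,…,n} with |S₁| = s₁ and |S₂| = s₂, then the probability that S₁ ∩ S₂ ≠ ∅ is at least 1 − e⁻¹. Equivalently, the number of ordered pairs (A, B) of disjoint subsets of {1,…,n} with |A| = s₁ and |B| = s₂ is at most e⁻¹ · C(n, s₁) · C(n, s₂), where C(·,·) denotes the binomial coefficient and e = exp(1). -/

import Mathlib

lemma compl_disj {n : ℕ} (A B : Finset (Fin n)) : B ⊆ Aᶜ ↔ Disjoint A B := by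
  constructor
  · intro h
    rw [Finset.disjoint_left]
    intro a ha hb
    exact (Finset.mem_compl.mp (h hb)) ha
  · intro h b hb
    rw [Finset.mem_compl]
    exact fun ha => Finset.disjoint_left.mp h ha hb

lemma count_aux (n s₁ s₂ : ℕ) :
    ((Finset.univ : Finset (Finset (Fin n) × Finset (Fin n))).filter
        (fun AB => AB.1.card = s₁ ∧ AB.2.card = s₂ ∧ Disjoint AB.1 AB.2)).card
      = n.choose s₁ * (n - s₁).choose s₂ := by
  rw [Finset.card_filter, ← Finset.univ_product_univ, Finset.sum_product]
  have step : ∀ A : Finset (Fin n), A.card = s₁ →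
      (∑ B : Finset (Fin n), if A.card = s₁ ∧ B.card = s₂ ∧ Disjoint A B then 1 else 0)
        = (n - s₁).choose s₂ := by
    intro A hA
    simp only [hA, true_and]
    rw [← Finset.card_filter]
    have hset : Finset.univ.filter (fun B : Finset (Fin n) => B.card = s₂ ∧ Disjoint A B)
        = Aᶜ.powersetCard s₂ := by
      ext B
      simp only [Finset.mem_filter, Finset.mem_univ, true_and, Finset.mem_powersetCard,
        compl_disj]
      tauto
    rw [hset, Finset.card_powersetCard, Finset.card_compl, hA, Fintype.card_fin]
  calc (∑ A : Finset (Fin n), ∑ B : Finset (Fin n),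
        if A.card = s₁ ∧ B.card = s₂ ∧ Disjoint A B then 1 else 0)
      = ∑ A : Finset (Fin n), (if A.card = s₁ then (n - s₁).choose s₂ else 0) := by
        apply Finset.sum_congr rfl
        intro A _
        by_cases hA : A.card = s₁
        · rw [step A hA, if_pos hA]
        · rw [if_neg hA]
          apply Finset.sum_eq_zero
          intro B _
          rw [if_neg]; tauto
    _ = ∑ A ∈ Finset.univ.filter (fun A : Finset (Fin n) => A.card = s₁),
          (n - s₁).choose s₂ := (Finset.sum_filter _ _).symm
    _ = (Finset.univ.filter (fun A : Finset (Fin n) => A.card = s₁)).card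
          * (n - s₁).choose s₂ := by rw [Finset.sum_const, smul_eq_mul]
    _ = n.choose s₁ * (n - s₁).choose s₂ := by
        congr 1
        have : Finset.univ.filter (fun A : Finset (Fin n) => A.card = s₁)
            = (Finset.univ : Finset (Fin n)).powersetCard s₁ := by
          ext A; simp [Finset.mem_powersetCard]
        rw [this, Finset.card_powersetCard, Finset.card_univ, Fintype.card_fin]

lemma choose_bound (n s₁ s₂ : ℕ) (hn : 1 ≤ n) (h₁ : s₁ ≤ n) (h₂ : s₂ ≤ n)
    (hss : n ≤ s₁ * s₂) :
    ((n - s₁).choose s₂ : ℝ) ≤ Real.exp (-1) * (n.choose s₂) := by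
  have hn0 : (0:ℝ) < n := by exact_mod_cast hn
  set c : ℝ := 1 - s₁ / n with hc
  have hdiv1 : (s₁:ℝ) / n ≤ 1 := by
    rw [div_le_one hn0]; exact_mod_cast h₁
  have hc0 : 0 ≤ c := by rw [hc]; linarith
  have key : ((n - s₁).descFactorial s₂ : ℝ) ≤ Real.exp (-1) * (n.descFactorial s₂) := by
    have hprod1 : ((n - s₁).descFactorial s₂ : ℝ)
        = ∏ i ∈ Finset.range s₂, ((n - s₁ - i : ℕ) : ℝ) := by
      rw [Nat.descFactorial_eq_prod_range, Nat.cast_prod]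
    have hprod2 : ((n).descFactorial s₂ : ℝ) = ∏ i ∈ Finset.range s₂, ((n - i : ℕ) : ℝ) := by
      rw [Nat.descFactorial_eq_prod_range, Nat.cast_prod]
    rw [hprod1, hprod2]
    have hstep : ∀ i ∈ Finset.range s₂, ((n - s₁ - i : ℕ) : ℝ) ≤ c * ((n - i : ℕ) : ℝ) := by
      intro i hi
      have hi' : i < s₂ := Finset.mem_range.mp hi
      have hin : i < n := lt_of_lt_of_le hi' h₂
      have h2 : c * ((n - i : ℕ) : ℝ) = (n:ℝ) - i - s₁ + s₁ * i / n := by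
        rw [Nat.cast_sub hin.le, hc]; field_simp; ring
      by_cases h : s₁ + i ≤ n
      · have h1 : ((n - s₁ - i : ℕ) : ℝ) = (n:ℝ) - s₁ - i := by
          rw [Nat.cast_sub (by omega), Nat.cast_sub h₁]
        have h3 : (0:ℝ) ≤ (s₁:ℝ) * i / n := by positivity
        rw [h1, h2]; linarith
      · have h0 : n - s₁ - i = 0 := by omega
        rw [h0]
        have hnn : (0:ℝ) ≤ ((n - i : ℕ) : ℝ) := by positivity
        simpa using mul_nonneg hc0 hnn
    calc (∏ i ∈ Finset.range s₂, ((n - s₁ - i : ℕ) : ℝ))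
        ≤ ∏ i ∈ Finset.range s₂, (c * ((n - i : ℕ) : ℝ)) := by
          apply Finset.prod_le_prod
          · intro i _; positivity
          · exact hstep
      _ = c ^ s₂ * ∏ i ∈ Finset.range s₂, ((n - i : ℕ) : ℝ) := by
          rw [Finset.prod_mul_distrib, Finset.prod_const, Finset.card_range]
      _ ≤ Real.exp (-1) * ∏ i ∈ Finset.range s₂, ((n - i : ℕ) : ℝ) := by
          apply mul_le_mul_of_nonneg_right _ (Finset.prod_nonneg (fun i _ => by positivity))
          have hce : c ≤ Real.exp (-(s₁ / n)) := by
            have := Real.add_one_le_exp (-(s₁ / n : ℝ))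
            rw [hc]; linarith
          calc c ^ s₂ ≤ (Real.exp (-(s₁ / n))) ^ s₂ := pow_le_pow_left₀ hc0 hce s₂
            _ = Real.exp (-(s₁ * s₂ / n)) := by
                rw [← Real.exp_nat_mul]; ring_nf
            _ ≤ Real.exp (-1) := by
                apply Real.exp_le_exp.mpr
                have : (1:ℝ) ≤ s₁ * s₂ / n := by
                  rw [le_div_iff₀ hn0, one_mul]
                  exact_mod_cast hss
                linarith
  have hfac : (0:ℝ) < (s₂.factorial : ℝ) := by exact_mod_cast s₂.factorial_pos
  have e1 : ((n - s₁).choose s₂ : ℝ) * s₂.factorial = ((n - s₁).descFactorial s₂ : ℝ) := by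
    rw [Nat.descFactorial_eq_factorial_mul_choose]; push_cast; ring
  have e2 : ((n).choose s₂ : ℝ) * s₂.factorial = ((n).descFactorial s₂ : ℝ) := by
    rw [Nat.descFactorial_eq_factorial_mul_choose]; push_cast; ring
  rw [← e1, ← e2] at key
  have key2 : ((n - s₁).choose s₂ : ℝ) * s₂.factorial
      ≤ (Real.exp (-1) * (n).choose s₂) * s₂.factorial := by linarith
  exact (mul_le_mul_iff_of_pos_right hfac).mp key2

/-- If `S₁` and `S₂` are independent uniformly random subsets of `{1,…,n}` of sizes
`s₁, s₂ ≤ n` with `s₁² ≥ n` and `s₂² ≥ n`, then `P[S₁ ∩ S₂ ≠ ∅] ≥ 1 − e⁻¹`.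
Equivalently, the number of ordered pairs `(A, B)` of disjoint subsets of `{1,…,n}`
with `|A| = s₁` and `|B| = s₂` is at most `e⁻¹ · C(n,s₁) · C(n,s₂)`. -/
theorem expected_disjoint_pairs_bound (n s₁ s₂ : ℕ) (hn : 1 ≤ n)
    (h₁ : s₁ ≤ n) (h₂ : s₂ ≤ n) (hs₁ : n ≤ s₁ ^ 2) (hs₂ : n ≤ s₂ ^ 2) :
    (((Finset.univ : Finset (Finset (Fin n) × Finset (Fin n))).filter
        (fun AB => AB.1.card = s₁ ∧ AB.2.card = s₂ ∧ Disjoint AB.1 AB.2)).card : ℝ)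
      ≤ Real.exp (-1) * (n.choose s₁) * (n.choose s₂) := by
  have hss : n ≤ s₁ * s₂ := by
    by_contra h
    push_neg at h
    have : (s₁ * s₂) ^ 2 < n ^ 2 := Nat.pow_lt_pow_left h two_ne_zero
    have hmul : n ^ 2 ≤ s₁ ^ 2 * s₂ ^ 2 := by
      calc n ^ 2 = n * n := sq n
        _ ≤ s₁ ^ 2 * s₂ ^ 2 := Nat.mul_le_mul hs₁ hs₂
    nlinarith [sq_nonneg (s₁ * s₂)]
  rw [count_aux]
  push_cast
  have hb := choose_bound n s₁ s₂ hn h₁ h₂ hss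
  have hch : (0:ℝ) ≤ (n.choose s₁ : ℝ) := by positivity
  calc (n.choose s₁ : ℝ) * ((n - s₁).choose s₂ : ℝ)
      ≤ (n.choose s₁ : ℝ) * (Real.exp (-1) * (n.choose s₂)) :=
        mul_le_mul_of_nonneg_left hb hch
    _ = Real.exp (-1) * (n.choose s₁) * (n.choose s₂) := by ring
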